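/- Let ω = exp(2πi/3). For every natural number n and every z ∈ ℂ, p n (ω·z) = ωⁿ · p n z, and likewise p n (conj(ω)·z) = conj(ω)ⁿ · p n z. -/
import Mathlib


open Complex ComplexConjugate

/-- `p 0 z = 3`, `p 1 z = z`, `p 2 z = z² − 2·conj z`, and
`p n z = z·p (n−1) z − conj z·p (n−2) z + p (n−3) z` for `n ≥ 3`. -/
noncomputable def p : ℕ → ℂ → ℂ
  | 0, _ => 3
  | 1, z => z
  | 2, z => z ^ 2 - 2 * conj z
  | (n + 3), z => z * p (n + 2) z - conj z * p (n + 1) z + p n z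

lemma p_key (w : ℂ) (hw3 : w ^ 3 = 1) (hwc : conj w = w ^ 2) :
    ∀ n z, p n (w * z) = w ^ n * p n z
  | 0, z => by simp [p]
  | 1, z => by simp [p]
  | 2, z => by
      simp only [p, map_mul, hwc]
      ring
  | (n + 3), z => by
      have h2 := p_key w hw3 hwc (n + 2) z
      have h1 := p_key w hw3 hwc (n + 1) z
      have h0 := p_key w hw3 hwc n z
      show w * z * p (n + 2) (w * z) - conj (w * z) * p (n + 1) (w * z) + p n (w * z)
          = w ^ (n + 3) * (z * p (n + 2) z - conj z * p (n + 1) z + p n z)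
      rw [map_mul, hwc, h2, h1, h0]
      linear_combination (-(w ^ n * p n z)) * hw3

/-- Equivariance of `p n` under rotation by the cube roots of unity
`ω = exp(2πi/3)` and `conj ω`. -/
theorem p_rotation (n : ℕ) (z : ℂ) :
    let ω : ℂ := exp (2 * Real.pi * I / 3)
    p n (ω * z) = ω ^ n * p n z ∧
    p n (conj ω * z) = (conj ω) ^ n * p n z := by
  intro ω
  have hw3 : ω ^ 3 = 1 := by
    show exp (2 * Real.pi * I / 3) ^ 3 = 1
    rw [← Complex.exp_nat_mul]
    norm_num
    rw [show (3 : ℂ) * (2 * Real.pi * I / 3) = 2 * Real.pi * I by ring,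
      Complex.exp_two_pi_mul_I]
  have hwc : conj ω = ω ^ 2 := by
    show conj (exp (2 * Real.pi * I / 3)) = exp (2 * Real.pi * I / 3) ^ 2
    rw [← Complex.exp_conj, ← Complex.exp_nat_mul]
    rw [show (starRingEnd ℂ) (2 * Real.pi * I / 3)
        = (2 : ℕ) * (2 * Real.pi * I / 3) - 2 * Real.pi * I by
      simp [map_div₀, map_ofNat, Complex.conj_I]; ring]
    rw [Complex.exp_sub, Complex.exp_two_pi_mul_I]
    ring
  have hwc3 : (conj ω) ^ 3 = 1 := by rw [← map_pow, hw3, map_one]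
  have hwcc : conj (conj ω) = (conj ω) ^ 2 := by
    rw [← map_pow, ← hwc, Complex.conj_conj]
  exact ⟨p_key ω hw3 hwc n z, p_key (conj ω) hwc3 hwcc n z⟩
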